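/- Let d ≥ 1 and let A_1, …, A_N be real symmetric d×d matrices. Then (A_1, …, A_N) has the phase retrieval property on ℝ^d if and only if the only real d×d matrix Q of rank at most 1 satisfying Tr(A_jQ) = 0 for all 1 ≤ j ≤ N is Q = 0. -/

import Mathlib

open Matrix

/-- A tuple of real symmetric `d×d` matrices has the phase retrieval property on `ℝ^d`
if equality of all quadratic measurements implies equality up to sign. -/
def PhaseRetrievableR {d N : ℕ} (A : Fin N → Matrix (Fin d) (Fin d) ℝ) : Prop :=
  ∀ x y : Fin d → ℝ,
    (∀ j, x ⬝ᵥ (A j) *ᵥ x = y ⬝ᵥ (A j) *ᵥ y) → x = y ∨ x = -y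

lemma trace_mul_vecMulVec {d : ℕ} (M : Matrix (Fin d) (Fin d) ℝ) (u v : Fin d → ℝ) :
    Matrix.trace (M * vecMulVec u v) = v ⬝ᵥ M *ᵥ u := by
  simp only [Matrix.trace, Matrix.diag, Matrix.mul_apply, vecMulVec_apply,
    dotProduct, mulVec, Finset.mul_sum]
  refine Finset.sum_congr rfl fun i _ => Finset.sum_congr rfl fun k _ => by ring

lemma rank_vecMulVec_le {d : ℕ} (u v : Fin d → ℝ) :
    (vecMulVec u v).rank ≤ 1 := by
  rw [vecMulVec_eq (Fin 1)]
  calc (replicateCol (Fin 1) u * replicateRow (Fin 1) v).rank ≤ (replicateCol (Fin 1) u).rank :=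
        Matrix.rank_mul_le_left _ _
    _ ≤ Fintype.card (Fin 1) := Matrix.rank_le_card_width _
    _ = 1 := by simp

lemma rank_le_one_decomp {d : ℕ} (Q : Matrix (Fin d) (Fin d) ℝ) (hQ : Q.rank ≤ 1) :
    ∃ u v : Fin d → ℝ, Q = vecMulVec u v := by
  rw [Matrix.rank] at hQ
  obtain ⟨w, hw⟩ := finrank_le_one_iff.mp hQ
  refine ⟨(w : Fin d → ℝ), fun j => (hw ⟨Q *ᵥ Pi.single j 1,
    ⟨Pi.single j 1, rfl⟩⟩).choose, ?_⟩
  ext i j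
  have h := (hw ⟨Q *ᵥ Pi.single j 1, ⟨Pi.single j 1, rfl⟩⟩).choose_spec
  have h2 : (hw ⟨Q *ᵥ Pi.single j 1, ⟨Pi.single j 1, rfl⟩⟩).choose • (w : Fin d → ℝ)
      = Q *ᵥ Pi.single j 1 := by
    have := congrArg Subtype.val h
    rwa [Submodule.coe_smul] at this
  have h3 := congrFun h2 i
  simp only [Pi.smul_apply, smul_eq_mul] at h3
  simp only [vecMulVec_apply]
  rw [mul_comm, h3]
  simp [mulVec, dotProduct, Pi.single_apply]

theorem stmt_2 (d N : ℕ) (hd : 1 ≤ d) (A : Fin N → Matrix (Fin d) (Fin d) ℝ)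
    (hA : ∀ j, (A j).IsSymm) :
    PhaseRetrievableR A ↔
      ∀ Q : Matrix (Fin d) (Fin d) ℝ, Q.rank ≤ 1 →
        (∀ j, Matrix.trace (A j * Q) = 0) → Q = 0 := by
  have key : ∀ (j : Fin N) (x y : Fin d → ℝ),
      x ⬝ᵥ (A j) *ᵥ y = y ⬝ᵥ (A j) *ᵥ x := by
    intro j x y
    have hsym : ∀ i k, A j i k = A j k i := fun i k =>
      congrFun (congrFun (hA j).eq k) i
    simp only [dotProduct, mulVec, Finset.mul_sum]
    rw [Finset.sum_comm]
    refine Finset.sum_congr rfl fun k _ => Finset.sum_congr rfl fun i _ => by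
      rw [hsym k i]; ring
  constructor
  · intro hPR Q hrk htr
    obtain ⟨u, v, rfl⟩ := rank_le_one_decomp Q hrk
    by_contra hne
    have hu : u ≠ 0 := by
      rintro rfl; apply hne; ext i j; simp [vecMulVec_apply]
    have hv : v ≠ 0 := by
      rintro rfl; apply hne; ext i j; simp [vecMulVec_apply]
    have hvu : ∀ j, v ⬝ᵥ (A j) *ᵥ u = 0 := by
      intro j; rw [← trace_mul_vecMulVec]; exact htr j
    have := hPR (u + v) (v - u) (by
      intro j
      have h1 := key j u v
      have h2 := hvu j
      simp only [Matrix.mulVec_add, Matrix.mulVec_sub, dotProduct_add,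
        dotProduct_sub, add_dotProduct, sub_dotProduct]
      linarith)
    rcases this with h | h
    · apply hu
      have := congrArg (fun z => z - (v - u)) h
      ext i
      have h2 := congrFun h i
      simp only [Pi.add_apply, Pi.sub_apply] at h2
      have : u i = - u i := by linarith
      have : u i = 0 := by linarith
      simpa using this
    · apply hv
      ext i
      have h2 := congrFun h i
      simp only [Pi.add_apply, Pi.neg_apply, Pi.sub_apply] at h2
      have : v i = 0 := by linarith
      simpa using this
  · intro hQ x y hxy
    have h0 : ∀ j, (x + y) ⬝ᵥ (A j) *ᵥ (x - y) = 0 := by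
      intro j
      have h1 := key j x y
      have h2 := hxy j
      simp only [Matrix.mulVec_sub, dotProduct_sub, add_dotProduct]
      linarith
    have hz : vecMulVec (x - y) (x + y) = 0 := by
      apply hQ _ (_root_.rank_vecMulVec_le _ _)
      intro j
      rw [trace_mul_vecMulVec]
      exact h0 j
    by_cases hxy' : x = y
    · exact Or.inl hxy'
    · right
      have : ∃ i, x i - y i ≠ 0 := by
        by_contra hc
        push_neg at hc
        apply hxy'
        ext i; have := hc i; linarith
      obtain ⟨i, hi⟩ := this
      ext k
      have := congrFun (congrFun hz i) k
      simp only [vecMulVec_apply, Matrix.zero_apply, Pi.sub_apply, Pi.add_apply] at this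
      have hk : x k + y k = 0 := by
        rcases mul_eq_zero.mp this with h | h
        · exact absurd h hi
        · exact h
      simp only [Pi.neg_apply]
      linarith
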